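/- Let M be a real symmetric m×m matrix with all entries strictly positive. If ⟨x, My⟩² ≥ ⟨x, Mx⟩·⟨y, My⟩ holds for all entrywise nonnegative x, y ∈ ℝ^m, then for every x ∈ ℝ^m and every y ≥ 0 with y ≠ 0, ⟨x, My⟩ = 0 implies ⟨x, Mx⟩ ≤ 0. -/

import Mathlib

open Matrix

private lemma aux_neg (m : ℕ) (M : Matrix (Fin m) (Fin m) ℝ)
    (hsym : ∀ a b : Fin m → ℝ, a ⬝ᵥ M.mulVec b = b ⬝ᵥ M.mulVec a)
    (hAF : ∀ x y : Fin m → ℝ, (∀ i, 0 ≤ x i) → (∀ i, 0 ≤ y i) →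
      (x ⬝ᵥ M.mulVec x) * (y ⬝ᵥ M.mulVec y) ≤ (x ⬝ᵥ M.mulVec y) ^ 2)
    (z : Fin m → ℝ) (c : ℝ) (hc : 0 < c) (hz : ∀ i, c ≤ z i)
    (hQ : 0 < z ⬝ᵥ M.mulVec z)
    (x : Fin m → ℝ) (hxz : x ⬝ᵥ M.mulVec z = 0) :
    x ⬝ᵥ M.mulVec x ≤ 0 := by
  set S := ∑ j, |x j| with hS
  have hS0 : 0 ≤ S := Finset.sum_nonneg fun j _ => abs_nonneg _
  set t := c / (1 + S) with ht
  have ht0 : 0 < t := div_pos hc (by linarith)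
  have htS : t * S ≤ c := by
    rw [ht, div_mul_eq_mul_div, div_le_iff₀ (by linarith)]
    nlinarith
  have hnn : ∀ i, 0 ≤ (z + t • x) i := by
    intro i
    have h1 : |x i| ≤ S :=
      Finset.single_le_sum (f := fun j => |x j|) (fun j _ => abs_nonneg _) (Finset.mem_univ i)
    have h2 : -(t * S) ≤ t * x i := by nlinarith [neg_abs_le (x i)]
    have h3 := hz i
    simp only [Pi.add_apply, Pi.smul_apply, smul_eq_mul]
    linarith
  have hznn : ∀ i, 0 ≤ z i := fun i => le_trans hc.le (hz i)
  have key := hAF (z + t • x) z hnn hznn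
  have hzx0 : z ⬝ᵥ M.mulVec x = 0 := (hsym z x).trans hxz
  have e1 : (z + t • x) ⬝ᵥ M.mulVec z = z ⬝ᵥ M.mulVec z := by
    simp [add_dotProduct, smul_dotProduct, hxz]
  have e2 : (z + t • x) ⬝ᵥ M.mulVec (z + t • x)
      = z ⬝ᵥ M.mulVec z + t ^ 2 * (x ⬝ᵥ M.mulVec x) := by
    simp [Matrix.mulVec_add, Matrix.mulVec_smul, dotProduct_add, add_dotProduct,
      dotProduct_smul, smul_dotProduct, smul_eq_mul, hxz, hzx0]
    ring
  rw [e1, e2] at key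
  nlinarith [mul_pos (mul_pos ht0 ht0) hQ]

/-- If a symmetric positive matrix satisfies the AF-type inequality for all
nonnegative vectors, then `⟨x, My⟩ = 0` implies `⟨x, Mx⟩ ≤ 0` for arbitrary `x`
and nonnegative nonzero `y`. -/
theorem stmt_1 (m : ℕ) (M : Matrix (Fin m) (Fin m) ℝ) (hM : M.IsHermitian)
    (hpos : ∀ i j, 0 < M i j)
    (hAF : ∀ x y : Fin m → ℝ, (∀ i, 0 ≤ x i) → (∀ i, 0 ≤ y i) →
      (x ⬝ᵥ M.mulVec x) * (y ⬝ᵥ M.mulVec y) ≤ (x ⬝ᵥ M.mulVec y) ^ 2)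
    (x y : Fin m → ℝ) (hy : ∀ i, 0 ≤ y i) (hy0 : y ≠ 0)
    (hxy : x ⬝ᵥ M.mulVec y = 0) :
    x ⬝ᵥ M.mulVec x ≤ 0 := by
  have hsym : ∀ a b : Fin m → ℝ, a ⬝ᵥ M.mulVec b = b ⬝ᵥ M.mulVec a := by
    intro a b
    have hT : Mᵀ = M := by
      ext i j
      simpa [Matrix.conjTranspose_apply] using congrFun (congrFun hM.eq i) j
    rw [Matrix.dotProduct_mulVec, ← Matrix.mulVec_transpose, hT]
    exact dotProduct_comm _ _
  have hBnn : ∀ a b : Fin m → ℝ, (∀ i, 0 ≤ a i) → (∀ i, 0 ≤ b i) →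
      0 ≤ a ⬝ᵥ M.mulVec b := by
    intro a b ha hb
    simp only [Matrix.mulVec, dotProduct]
    exact Finset.sum_nonneg fun i _ => mul_nonneg (ha i)
      (Finset.sum_nonneg fun j _ => mul_nonneg (hpos i j).le (hb j))
  obtain ⟨k, hk⟩ := Function.ne_iff.mp hy0
  have hyk : 0 < y k := lt_of_le_of_ne (hy k) (Ne.symm hk)
  have hY : 0 < y ⬝ᵥ M.mulVec y := by
    simp only [Matrix.mulVec, dotProduct]
    apply Finset.sum_pos'
    · intro i _
      exact mul_nonneg (hy i)
        (Finset.sum_nonneg fun j _ => mul_nonneg (hpos i j).le (hy j))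
    · refine ⟨k, Finset.mem_univ k, ?_⟩
      apply mul_pos hyk
      apply Finset.sum_pos'
      · intro j _; exact mul_nonneg (hpos k j).le (hy j)
      · exact ⟨k, Finset.mem_univ k, mul_pos (hpos k k) hyk⟩
  have hone : ∀ i : Fin m, (0:ℝ) ≤ (fun _ : Fin m => (1:ℝ)) i := fun i => zero_le_one
  have hbound : ∀ ε : ℝ, 0 < ε →
      x ⬝ᵥ M.mulVec x ≤
        ε ^ 2 * (x ⬝ᵥ M.mulVec (fun _ => (1:ℝ))) ^ 2 / (y ⬝ᵥ M.mulVec y) := by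
    intro ε hε
    set o : Fin m → ℝ := fun _ => 1 with ho
    set z := y + ε • o with hzdef
    have hzc : ∀ i, ε ≤ z i := by
      intro i
      have := hy i
      simp only [hzdef, ho, Pi.add_apply, Pi.smul_apply, smul_eq_mul, mul_one]
      linarith
    have hQexp : z ⬝ᵥ M.mulVec z
        = y ⬝ᵥ M.mulVec y + ε * (y ⬝ᵥ M.mulVec o) + ε * (o ⬝ᵥ M.mulVec y)
          + ε ^ 2 * (o ⬝ᵥ M.mulVec o) := by
      simp [hzdef, Matrix.mulVec_add, Matrix.mulVec_smul, dotProduct_add,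
        add_dotProduct, dotProduct_smul, smul_dotProduct, smul_eq_mul]
      ring
    have hQY : y ⬝ᵥ M.mulVec y ≤ z ⬝ᵥ M.mulVec z := by
      have h1 := hBnn y o hy hone
      have h2 := hBnn o y hone hy
      have h3 := hBnn o o hone hone
      nlinarith
    have hQ0 : 0 < z ⬝ᵥ M.mulVec z := lt_of_lt_of_le hY hQY
    have hce : x ⬝ᵥ M.mulVec z = ε * (x ⬝ᵥ M.mulVec o) := by
      simp [hzdef, Matrix.mulVec_add, Matrix.mulVec_smul, dotProduct_add,
        dotProduct_smul, smul_eq_mul, hxy]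
    set s := (x ⬝ᵥ M.mulVec z) / (z ⬝ᵥ M.mulVec z) with hs
    set w := x - s • z with hw
    have hwz : w ⬝ᵥ M.mulVec z = 0 := by
      simp only [hw, sub_dotProduct, smul_dotProduct, smul_eq_mul, hs]
      field_simp
      ring
    have hneg : w ⬝ᵥ M.mulVec w ≤ 0 := aux_neg m M hsym hAF z ε hε hzc hQ0 w hwz
    have hzw : z ⬝ᵥ M.mulVec w = 0 := (hsym z w).trans hwz
    have hxw : x ⬝ᵥ M.mulVec x
        = w ⬝ᵥ M.mulVec w + s ^ 2 * (z ⬝ᵥ M.mulVec z) := by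
      have hx : x = w + s • z := by simp [hw]
      rw [hx]
      simp [Matrix.mulVec_add, Matrix.mulVec_smul, dotProduct_add, add_dotProduct,
        dotProduct_smul, smul_dotProduct, smul_eq_mul, hwz, hzw]
      ring
    have h2 : s ^ 2 * (z ⬝ᵥ M.mulVec z) = (x ⬝ᵥ M.mulVec z) ^ 2 / (z ⬝ᵥ M.mulVec z) := by
      rw [hs]
      field_simp
    have h3 : (x ⬝ᵥ M.mulVec z) ^ 2 / (z ⬝ᵥ M.mulVec z)
        ≤ (x ⬝ᵥ M.mulVec z) ^ 2 / (y ⬝ᵥ M.mulVec y) :=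
      div_le_div_of_nonneg_left (sq_nonneg _) hY hQY
    calc x ⬝ᵥ M.mulVec x ≤ s ^ 2 * (z ⬝ᵥ M.mulVec z) := by linarith
      _ = (x ⬝ᵥ M.mulVec z) ^ 2 / (z ⬝ᵥ M.mulVec z) := h2
      _ ≤ (x ⬝ᵥ M.mulVec z) ^ 2 / (y ⬝ᵥ M.mulVec y) := h3
      _ = ε ^ 2 * (x ⬝ᵥ M.mulVec o) ^ 2 / (y ⬝ᵥ M.mulVec y) := by rw [hce]; ring_nf
  set d := x ⬝ᵥ M.mulVec (fun _ => (1:ℝ)) with hd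
  set q := x ⬝ᵥ M.mulVec x with hq
  set Y := y ⬝ᵥ M.mulVec y with hYd
  by_contra hcon
  push_neg at hcon
  set ε := min 1 (q * Y / (2 * (d ^ 2 + 1))) with hε
  have hε0 : 0 < ε := lt_min one_pos (by positivity)
  have hε1 : ε ≤ 1 := min_le_left _ _
  have hε2 : ε * (2 * (d ^ 2 + 1)) ≤ q * Y :=
    (le_div_iff₀ (by positivity)).mp (min_le_right _ _)
  have hb := hbound ε hε0
  have hlt : ε ^ 2 * d ^ 2 / Y < q := by
    rw [div_lt_iff₀ hY]
    nlinarith [mul_nonneg (mul_nonneg hε0.le (sq_nonneg d)) (by linarith : (0:ℝ) ≤ 1 - ε),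
      mul_pos hε0 hε0, sq_nonneg d]
  linarith
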